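/- Let X, Y be Polish spaces, ν a Borel probability measure on X, and h : X × Y → ℝ a Carathéodory function such that |h(x,y)| ≤ f(x) for all (x,y), where f : X → ℝ is nonnegative and ν-integrable. If ⟨μ_n⟩ is a sequence of Borel probability measures on X × Y, each with X-marginal equal to ν, converging weakly to μ (which then also has X-marginal ν), then ∫ h dμ_n → ∫ h dμ. -/

import Mathlib

open MeasureTheory Filter Topology
open scoped ENNReal NNReal BoundedContinuousFunction

lemma tendsto_of_approx (A : ℕ → ℝ) (B : ℝ)
    (H : ∀ ε : ℝ, 0 < ε → ∃ (a : ℕ → ℝ) (b : ℝ), Tendsto a atTop (nhds b) ∧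
      (∀ n, |A n - a n| ≤ ε) ∧ |B - b| ≤ ε) :
    Tendsto A atTop (nhds B) := by
  rw [Metric.tendsto_atTop]
  intro ε hε
  obtain ⟨a, b, hab, hAa, hBb⟩ := H (ε/4) (by linarith)
  obtain ⟨N, hN⟩ := (Metric.tendsto_atTop.1 hab) (ε/4) (by linarith)
  refine ⟨N, fun n hn => ?_⟩
  have h1 := hAa n
  have h2 := hN n hn
  rw [Real.dist_eq] at h2 ⊢
  have : |A n - B| ≤ |A n - a n| + |a n - b| + |b - B| := by
    calc |A n - B| = |(A n - a n) + (a n - b) + (b - B)| := by ring_nf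
      _ ≤ _ := by
        refine (abs_add_le _ _).trans ?_
        exact add_le_add (abs_add_le _ _) le_rfl
  have h3 : |b - B| = |B - b| := abs_sub_comm _ _
  linarith [le_of_lt h2, hBb, h3 ▸ (le_refl |b - B|)]

lemma bdd_integrable {Z : Type*} [MeasurableSpace Z] (θ : Measure Z) [IsFiniteMeasure θ]
    {g : Z → ℝ} (hg : Measurable g) {C : ℝ} (hC : ∀ z, |g z| ≤ C) : Integrable g θ := by
  refine Integrable.mono' (integrable_const C) hg.aestronglyMeasurable ?_
  exact Filter.Eventually.of_forall (fun z => by simpa using hC z)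

lemma joint_meas {X Y : Type*} [TopologicalSpace Y] [PolishSpace Y] [MeasurableSpace Y]
    [BorelSpace Y] [MeasurableSpace X]
    (h : X × Y → ℝ) (hmeas : ∀ y, Measurable fun x => h (x, y))
    (hcont : ∀ x, Continuous fun y => h (x, y)) : Measurable h := by
  letI := TopologicalSpace.upgradeIsCompletelyMetrizable Y
  have : Measurable (Function.uncurry (fun (y : Y) (x : X) => h (x, y))) :=
    measurable_uncurry_of_continuous_of_measurable (fun x => hcont x) (fun y => hmeas y)
  have := this.comp (measurable_swap : Measurable (Prod.swap : X × Y → Y × X))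
  exact this

lemma bdd_integrable' {Z : Type*} [MeasurableSpace Z] (θ : Measure Z) [IsFiniteMeasure θ]
    {g : Z → ℝ} (hg : Measurable g) {C : ℝ} (hC : ∀ z, |g z| ≤ C) : Integrable g θ := by
  refine Integrable.mono' (integrable_const C) hg.aestronglyMeasurable ?_
  exact Filter.Eventually.of_forall (fun z => by simpa using hC z)

lemma integral_fst_marg {X Y : Type*} [MeasurableSpace X] [MeasurableSpace Y]
    (θ : Measure (X × Y)) (ν : Measure X) (hm : θ.map Prod.fst = ν)
    {q : X → ℝ} (hq : AEStronglyMeasurable q ν) : ∫ z, q z.1 ∂θ = ∫ x, q x ∂ν := by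
  subst hm
  exact (integral_map measurable_fst.aemeasurable hq).symm

lemma prod_tendsto {X Y : Type*} [TopologicalSpace X] [PolishSpace X]
    [MeasurableSpace X] [BorelSpace X]
    [TopologicalSpace Y] [PolishSpace Y] [MeasurableSpace Y] [BorelSpace Y]
    (ν : Measure X) [IsProbabilityMeasure ν]
    (μ : ℕ → Measure (X × Y)) (μlim : Measure (X × Y))
    [∀ n, IsProbabilityMeasure (μ n)] [IsProbabilityMeasure μlim]
    (hmarg : ∀ n, (μ n).map Prod.fst = ν) (hmarglim : μlim.map Prod.fst = ν)
    (hweak : ∀ g : BoundedContinuousFunction (X × Y) ℝ,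
      Tendsto (fun n => ∫ z, g z ∂(μ n)) atTop (nhds (∫ z, g z ∂μlim)))
    (g : X → ℝ) (hg : Measurable g) (C : ℝ) (hgC : ∀ x, |g x| ≤ C)
    (φ : Y →ᵇ ℝ) :
    Tendsto (fun n => ∫ z, g z.1 * φ z.2 ∂(μ n)) atTop
      (nhds (∫ z, g z.1 * φ z.2 ∂μlim)) := by
  letI := TopologicalSpace.upgradeIsCompletelyMetrizable X
  apply tendsto_of_approx
  intro ε hε
  have hgint : Integrable g ν := bdd_integrable' ν hg hgC
  have hε' : 0 < ε / (‖φ‖ + 1) := by positivity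
  obtain ⟨g', hg', hg'int⟩ := hgint.exists_boundedContinuous_integral_sub_le hε'
  -- the approximating sequence
  set Φ : (X × Y) →ᵇ ℝ :=
    (g'.compContinuous ⟨Prod.fst, continuous_fst⟩) *
      (φ.compContinuous ⟨Prod.snd, continuous_snd⟩) with hΦ
  have hΦapp : ∀ z : X × Y, Φ z = g' z.1 * φ z.2 := fun z => rfl
  -- uniform error bound
  have key : ∀ θ : Measure (X × Y), IsProbabilityMeasure θ → θ.map Prod.fst = ν →
      |∫ z, g z.1 * φ z.2 ∂θ - ∫ z, Φ z ∂θ| ≤ ε := by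
    intro θ hθ hθm
    have hint1 : Integrable (fun z : X × Y => g z.1 * φ z.2) θ := by
      refine bdd_integrable' θ ((hg.comp measurable_fst).mul
        (φ.continuous.measurable.comp measurable_snd)) (C := |C| * ‖φ‖) ?_
      intro z
      rw [abs_mul]
      refine mul_le_mul ((hgC z.1).trans (le_abs_self C)) ?_ (abs_nonneg _) (abs_nonneg _)
      simpa [Real.norm_eq_abs] using φ.norm_coe_le_norm z.2
    have hint2 : Integrable (fun z : X × Y => g' z.1 * φ z.2) θ := by
      refine bdd_integrable' θ ((g'.continuous.measurable.comp measurable_fst).mul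
        (φ.continuous.measurable.comp measurable_snd)) (C := ‖g'‖ * ‖φ‖) ?_
      intro z
      rw [abs_mul]
      refine mul_le_mul ?_ ?_ (abs_nonneg _) (norm_nonneg _)
      · simpa [Real.norm_eq_abs] using g'.norm_coe_le_norm z.1
      · simpa [Real.norm_eq_abs] using φ.norm_coe_le_norm z.2
    have habs : Measurable (fun x : X => |g x - g' x|) :=
      (hg.sub g'.continuous.measurable).abs
    have hintabs : Integrable (fun z : X × Y => |g z.1 - g' z.1| * ‖φ‖) θ := by
      refine bdd_integrable' θ ((habs.comp measurable_fst).mul measurable_const)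
        (C := (|C| + ‖g'‖) * ‖φ‖) ?_
      intro z
      rw [abs_mul, abs_abs, abs_of_nonneg (norm_nonneg φ)]
      refine mul_le_mul ?_ le_rfl (norm_nonneg _) (by positivity)
      refine (abs_sub _ _).trans (add_le_add ((hgC z.1).trans (le_abs_self C))
        (by simpa [Real.norm_eq_abs] using g'.norm_coe_le_norm z.1))
    simp_rw [hΦapp]
    rw [← integral_sub hint1 hint2]
    calc |∫ z, (g z.1 * φ z.2 - g' z.1 * φ z.2) ∂θ|
        ≤ ∫ z, |g z.1 * φ z.2 - g' z.1 * φ z.2| ∂θ := by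
          simpa [Real.norm_eq_abs] using
            norm_integral_le_integral_norm (μ := θ)
              (fun z : X × Y => g z.1 * φ z.2 - g' z.1 * φ z.2)
      _ ≤ ∫ z, |g z.1 - g' z.1| * ‖φ‖ ∂θ := by
          refine integral_mono ((hint1.sub hint2).abs) hintabs ?_
          intro z
          show |g z.1 * φ z.2 - g' z.1 * φ z.2| ≤ |g z.1 - g' z.1| * ‖φ‖
          have : g z.1 * φ z.2 - g' z.1 * φ z.2 = (g z.1 - g' z.1) * φ z.2 := by ring
          rw [this, abs_mul]
          refine mul_le_mul le_rfl ?_ (abs_nonneg _) (abs_nonneg _)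
          simpa [Real.norm_eq_abs] using φ.norm_coe_le_norm z.2
      _ = (∫ z, |g z.1 - g' z.1| ∂θ) * ‖φ‖ := integral_mul_const _ _
      _ = (∫ x, |g x - g' x| ∂ν) * ‖φ‖ := by
          rw [integral_fst_marg θ ν hθm habs.aestronglyMeasurable]
      _ ≤ (ε / (‖φ‖ + 1)) * ‖φ‖ := by
          refine mul_le_mul ?_ le_rfl (norm_nonneg _) hε'.le
          simpa [Real.norm_eq_abs] using hg'
      _ ≤ ε := by
          rw [div_mul_eq_mul_div]
          rw [div_le_iff₀ (by positivity)]
          nlinarith [norm_nonneg φ]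
  exact ⟨fun n => ∫ z, Φ z ∂(μ n), ∫ z, Φ z ∂μlim, hweak Φ,
    fun n => key (μ n) inferInstance (hmarg n), key μlim inferInstance hmarglim⟩

lemma tsum_half : ∑' m : ℕ, (2⁻¹:ℝ≥0∞)^(m+1) = 1 := by
  simp_rw [pow_succ]
  rw [ENNReal.tsum_mul_right, ENNReal.tsum_geometric, ENNReal.one_sub_inv_two]
  rw [inv_inv]
  exact ENNReal.mul_inv_cancel (by norm_num) (by norm_num)

lemma tight_of_tendsto {Y : Type*} [TopologicalSpace Y] [PolishSpace Y] [MeasurableSpace Y]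
    [BorelSpace Y] (ρ : ℕ → ProbabilityMeasure Y) (ρl : ProbabilityMeasure Y)
    (htend : Tendsto ρ atTop (𝓝 ρl)) {ε : ℝ≥0∞} (hε : 0 < ε) :
    ∃ K : Set Y, IsCompact K ∧ (∀ n, (ρ n : Measure Y) Kᶜ ≤ ε) ∧ (ρl : Measure Y) Kᶜ ≤ ε := by
  letI := TopologicalSpace.upgradeIsCompletelyMetrizable Y
  by_cases hY : Nonempty Y
  swap
  · exfalso
    have h1 : (ρl : Measure Y) Set.univ = 1 := measure_univ
    have h2 : (Set.univ : Set Y) = ∅ := by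
      simp only [Set.eq_empty_iff_forall_notMem]; intro y _; exact hY ⟨y⟩
    rw [h2, measure_empty] at h1
    exact one_ne_zero h1.symm
  have hu : DenseRange (TopologicalSpace.denseSeq Y) := TopologicalSpace.denseRange_denseSeq Y
  set d := TopologicalSpace.denseSeq Y with hd
  have stepA : ∀ (r : ℝ), 0 < r → ∀ (δ : ℝ≥0∞), 0 < δ → ∃ N : ℕ,
      (∀ n, (ρ n : Measure Y) (⋃ j ∈ Finset.range N, Metric.ball (d j) r)ᶜ ≤ δ) ∧
      (ρl : Measure Y) (⋃ j ∈ Finset.range N, Metric.ball (d j) r)ᶜ ≤ δ := by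
    intro r hr δ hδ
    set C : ℕ → Set Y := fun N => (⋃ j ∈ Finset.range N, Metric.ball (d j) r)ᶜ with hC
    have hCclosed : ∀ N, IsClosed (C N) := fun N =>
      (isOpen_biUnion (fun j _ => Metric.isOpen_ball)).isClosed_compl
    have hCanti : Antitone C := by
      intro a b hab
      apply Set.compl_subset_compl.2
      intro y hy
      simp only [Set.mem_iUnion, Finset.mem_range] at hy ⊢
      obtain ⟨j, hj, hyj⟩ := hy
      exact ⟨j, lt_of_lt_of_le hj hab, hyj⟩
    have hCempty : (⋂ N, C N) = ∅ := by
      rw [Set.eq_empty_iff_forall_notMem]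
      intro y hy
      obtain ⟨j, hj⟩ := Metric.denseRange_iff.1 hu y r hr
      have := Set.mem_iInter.1 hy (j + 1)
      apply this
      simp only [Set.mem_iUnion, Finset.mem_range]
      exact ⟨j, Nat.lt_succ_self j, by rw [Metric.mem_ball]; exact hj⟩
    have htendC : ∀ θ : ProbabilityMeasure Y,
        Tendsto (fun N => (θ : Measure Y) (C N)) atTop (𝓝 0) := by
      intro θ
      have := tendsto_measure_iInter_atTop (μ := (θ : Measure Y))
        (fun N => ((hCclosed N).measurableSet).nullMeasurableSet) hCanti
        ⟨0, measure_ne_top _ _⟩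
      rw [hCempty, measure_empty] at this
      exact this
    by_cases hδtop : δ = ⊤
    · exact ⟨0, fun n => hδtop ▸ le_top, hδtop ▸ le_top⟩
    have hδ2 : (0:ℝ≥0∞) < δ/2 := ENNReal.half_pos hδ.ne'
    obtain ⟨N₀, hN₀⟩ := ENNReal.tendsto_atTop_zero.1 (htendC ρl) (δ/2) hδ2
    have hlimsup : (atTop : Filter ℕ).limsup (fun n => (ρ n : Measure Y) (C N₀)) ≤
        (ρl : Measure Y) (C N₀) :=
      ProbabilityMeasure.limsup_measure_closed_le_of_tendsto htend (hCclosed N₀)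
    have hev : ∀ᶠ n in atTop, (ρ n : Measure Y) (C N₀) < δ := by
      refine eventually_lt_of_limsup_lt ?_ (by isBoundedDefault)
      calc (atTop : Filter ℕ).limsup (fun n => (ρ n : Measure Y) (C N₀)) ≤ _ := hlimsup
        _ ≤ δ/2 := hN₀ N₀ le_rfl
        _ < δ := ENNReal.half_lt_self hδ.ne' hδtop
    obtain ⟨n₀, hn₀⟩ := eventually_atTop.1 hev
    have hsmall : ∀ n, ∃ N, (ρ n : Measure Y) (C N) ≤ δ/2 := by
      intro n
      obtain ⟨N, hN⟩ := ENNReal.tendsto_atTop_zero.1 (htendC (ρ n)) (δ/2) hδ2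
      exact ⟨N, hN N le_rfl⟩
    choose F hF using hsmall
    refine ⟨max N₀ ((Finset.range n₀).sup F), fun n => ?_, ?_⟩
    · by_cases hn : n₀ ≤ n
      · exact le_of_lt (lt_of_le_of_lt (measure_mono (hCanti (le_max_left _ _))) (hn₀ n hn))
      · refine le_trans (le_trans (measure_mono (hCanti ?_)) (hF n)) (ENNReal.half_le_self)
        exact le_max_of_le_right (Finset.le_sup (Finset.mem_range.2 (not_le.1 hn)))
    · exact le_trans (le_trans (measure_mono (hCanti (le_max_left _ _))) (hN₀ N₀ le_rfl))
        ENNReal.half_le_self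
  -- Step B
  have hrm : ∀ m : ℕ, (0:ℝ) < 1/(m+1) := fun m => by positivity
  have hδm : ∀ m : ℕ, (0:ℝ≥0∞) < ε * 2⁻¹^(m+1) := fun m => by
    apply ENNReal.mul_pos hε.ne'
    simp [pow_ne_zero]
  choose N hN1 hN2 using fun m : ℕ => stepA (1/(m+1)) (hrm m) (ε * 2⁻¹^(m+1)) (hδm m)
  set U : ℕ → Set Y := fun m => ⋃ j ∈ Finset.range (N m), Metric.ball (d j) (1/(m+1)) with hU
  refine ⟨⋂ m, closure (U m), ?_, ?_, ?_⟩
  · -- compact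
    refine TotallyBounded.isCompact_of_isClosed ?_ (isClosed_iInter fun m => isClosed_closure)
    rw [Metric.totallyBounded_iff]
    intro e he
    obtain ⟨m, hm⟩ := exists_nat_one_div_lt (show (0:ℝ) < e/2 by linarith)
    refine ⟨d '' ↑(Finset.range (N m)), (Finset.range (N m)).finite_toSet.image d, ?_⟩
    have hsub1 : closure (U m) ⊆ ⋃ j ∈ Finset.range (N m), Metric.closedBall (d j) (1/(m+1)) := by
      apply closure_minimal
      · exact Set.iUnion₂_mono fun j _ => Metric.ball_subset_closedBall
      · exact Set.Finite.isClosed_biUnion (Finset.range (N m)).finite_toSet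
          fun j _ => Metric.isClosed_closedBall
    intro y hy
    have hy2 := hsub1 (Set.mem_iInter.1 hy m)
    simp only [Set.mem_iUnion, Finset.mem_range] at hy2
    obtain ⟨j, hj, hyj⟩ := hy2
    simp only [Set.mem_iUnion]
    refine ⟨d j, Set.mem_image_of_mem d (by simpa using hj), ?_⟩
    rw [Metric.mem_ball]
    calc dist y (d j) ≤ 1/(m+1) := Metric.mem_closedBall.1 hyj
      _ < e/2 := hm
      _ < e := by linarith
  · intro n
    calc (ρ n : Measure Y) (⋂ m, closure (U m))ᶜ
        = (ρ n : Measure Y) (⋃ m, (closure (U m))ᶜ) := by rw [Set.compl_iInter]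
      _ ≤ ∑' m, (ρ n : Measure Y) (closure (U m))ᶜ := measure_iUnion_le _
      _ ≤ ∑' m, ε * 2⁻¹^(m+1) := by
          refine ENNReal.tsum_le_tsum fun m => ?_
          refine le_trans (measure_mono (Set.compl_subset_compl.2 subset_closure)) (hN1 m n)
      _ = ε := by rw [ENNReal.tsum_mul_left, tsum_half, mul_one]
  · calc (ρl : Measure Y) (⋂ m, closure (U m))ᶜ
        = (ρl : Measure Y) (⋃ m, (closure (U m))ᶜ) := by rw [Set.compl_iInter]
      _ ≤ ∑' m, (ρl : Measure Y) (closure (U m))ᶜ := measure_iUnion_le _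
      _ ≤ ∑' m, ε * 2⁻¹^(m+1) := by
          refine ENNReal.tsum_le_tsum fun m => ?_
          refine le_trans (measure_mono (Set.compl_subset_compl.2 subset_closure)) (hN2 m)
      _ = ε := by rw [ENNReal.tsum_mul_left, tsum_half, mul_one]

lemma exists_G {X Y : Type*} [MeasurableSpace X] [MetricSpace Y]
    [SecondCountableTopology Y]
    (h : X × Y → ℝ) (hmeas : ∀ y, Measurable fun x => h (x, y))
    (hcont : ∀ x, Continuous fun y => h (x, y))
    (M : ℝ) (hM : 0 ≤ M) (hbM : ∀ z, |h z| ≤ M) (K : Set Y) (r : ℝ) :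
    ∃ G : X → ℝ, Measurable G ∧ (∀ x, 0 ≤ G x) ∧ (∀ x, G x ≤ 2*M) ∧
      (∀ x y y', y ∈ K → y' ∈ K → dist y y' < r → |h (x, y) - h (x, y')| ≤ G x) ∧
      (∀ x (e : ℝ), 0 ≤ e →
        (∀ y y', y ∈ K → y' ∈ K → dist y y' < r → |h (x, y) - h (x, y')| ≤ e) → G x ≤ e) := by
  set s : Set (Y × Y) := {p | p.1 ∈ K ∧ p.2 ∈ K ∧ dist p.1 p.2 < r} with hs
  rcases s.eq_empty_or_nonempty with hse | hsne
  · refine ⟨fun _ => 0, measurable_const, fun x => le_rfl, fun x => by positivity, ?_, ?_⟩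
    · intro x y y' hy hy' hd
      exfalso
      exact Set.eq_empty_iff_forall_notMem.1 hse (y, y') ⟨hy, hy', hd⟩
    · intro x e he _; exact he
  · haveI : Nonempty ↥s := hsne.to_subtype
    set u : ℕ → ↥s := TopologicalSpace.denseSeq ↥s with hu
    have hud : DenseRange u := TopologicalSpace.denseRange_denseSeq ↥s
    set G : X → ℝ := fun x => ⨆ i : ℕ, |h (x, (u i).1.1) - h (x, (u i).1.2)| with hG
    have hterm : ∀ x (p : ↥s), |h (x, (p : Y × Y).1) - h (x, (p : Y × Y).2)| ≤ 2*M := by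
      intro x p
      calc |h (x, (p : Y × Y).1) - h (x, (p : Y × Y).2)|
          ≤ |h (x, (p : Y × Y).1)| + |h (x, (p : Y × Y).2)| := abs_sub _ _
        _ ≤ M + M := add_le_add (hbM _) (hbM _)
        _ = 2*M := by ring
    have hbdd : ∀ x, BddAbove (Set.range fun i : ℕ => |h (x, (u i).1.1) - h (x, (u i).1.2)|) := by
      intro x
      exact ⟨2*M, by rintro v ⟨i, rfl⟩; exact hterm x (u i)⟩
    refine ⟨G, ?_, ?_, ?_, ?_, ?_⟩
    · refine Measurable.iSup fun i => ?_
      exact ((hmeas _).sub (hmeas _)).abs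
    · intro x
      exact le_trans (abs_nonneg _) (le_ciSup (hbdd x) 0)
    · intro x
      exact ciSup_le fun i => hterm x (u i)
    · intro x y y' hy hy' hd
      set p : ↥s := ⟨(y, y'), ⟨hy, hy', hd⟩⟩ with hp
      have hcl : p ∈ closure (Set.range u) := hud.closure_range ▸ Set.mem_univ p
      obtain ⟨w, hwmem, hwlim⟩ := mem_closure_iff_seq_limit.1 hcl
      have hFcont : Continuous fun q : ↥s => |h (x, (q : Y × Y).1) - h (x, (q : Y × Y).2)| := by
        have h1 : Continuous fun q : ↥s => (q : Y × Y).1 :=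
          continuous_fst.comp continuous_subtype_val
        have h2 : Continuous fun q : ↥s => (q : Y × Y).2 :=
          continuous_snd.comp continuous_subtype_val
        exact (((hcont x).comp h1).sub ((hcont x).comp h2)).abs
      have hwle : ∀ k, |h (x, (w k : Y × Y).1) - h (x, (w k : Y × Y).2)| ≤ G x := by
        intro k
        obtain ⟨i, hi⟩ := hwmem k
        rw [← hi]
        exact le_ciSup (hbdd x) i
      have := (hFcont.continuousAt (x := p)).tendsto.comp hwlim
      exact le_of_tendsto this (Filter.Eventually.of_forall hwle)
    · intro x e he hub
      exact ciSup_le fun i => hub _ _ (u i).2.1 (u i).2.2.1 (u i).2.2.2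
section BddCase
variable {X Y : Type*} [TopologicalSpace X] [PolishSpace X]
    [MeasurableSpace X] [BorelSpace X]
    [TopologicalSpace Y] [PolishSpace Y] [MeasurableSpace Y] [BorelSpace Y]

lemma bounded_case (ν : Measure X) [IsProbabilityMeasure ν]
    (h : X × Y → ℝ)
    (hmeas : ∀ y, Measurable fun x => h (x, y))
    (hcont : ∀ x, Continuous fun y => h (x, y))
    (M : ℝ) (hM : 0 < M) (hbM : ∀ z, |h z| ≤ M)
    (μ : ℕ → Measure (X × Y)) (μlim : Measure (X × Y))
    [∀ n, IsProbabilityMeasure (μ n)] [IsProbabilityMeasure μlim]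
    (hmarg : ∀ n, (μ n).map Prod.fst = ν) (hmarglim : μlim.map Prod.fst = ν)
    (hweak : ∀ g : BoundedContinuousFunction (X × Y) ℝ,
      Tendsto (fun n => ∫ z, g z ∂(μ n)) atTop (nhds (∫ z, g z ∂μlim))) :
    Tendsto (fun n => ∫ z, h z ∂(μ n)) atTop (nhds (∫ z, h z ∂μlim)) := by
  letI := TopologicalSpace.upgradeIsCompletelyMetrizable Y
  have hjm : Measurable h := joint_meas h hmeas hcont
  -- Y-marginals
  set ρ : ℕ → ProbabilityMeasure Y := fun n =>
    ⟨(μ n).map Prod.snd, Measure.isProbabilityMeasure_map measurable_snd.aemeasurable⟩ with hρ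
  set ρl : ProbabilityMeasure Y :=
    ⟨μlim.map Prod.snd, Measure.isProbabilityMeasure_map measurable_snd.aemeasurable⟩ with hρl
  have htendρ : Tendsto ρ atTop (𝓝 ρl) := by
    rw [MeasureTheory.ProbabilityMeasure.tendsto_iff_forall_integral_tendsto]
    intro g
    have hid : ∀ θ : Measure (X × Y),
        ∫ y, g y ∂(θ.map Prod.snd) = ∫ z, (g.compContinuous ⟨Prod.snd, continuous_snd⟩) z ∂θ := by
      intro θ
      rw [integral_map measurable_snd.aemeasurable g.continuous.aestronglyMeasurable]
      rfl
    simp only [hρ, hρl]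
    show Tendsto (fun n => ∫ y, g y ∂((μ n).map Prod.snd)) atTop
      (𝓝 (∫ y, g y ∂(μlim.map Prod.snd)))
    simp_rw [hid]
    exact hweak _
  apply tendsto_of_approx
  intro ε hε
  set δ' : ℝ := ε / (4 * M) with hδ'
  have hδ'pos : 0 < δ' := by positivity
  obtain ⟨K, hKcpt, hKn, hKl⟩ := tight_of_tendsto ρ ρl htendρ
    (ε := ENNReal.ofReal δ') (by simpa using hδ'pos)
  have hKc : MeasurableSet K := hKcpt.isClosed.measurableSet
  -- the modulus functions
  have hGex := fun m : ℕ => exists_G h hmeas hcont M hM.le hbM K (1/(m+1))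
  choose G hGmeas hG0 hG2M hGub hGsmall using hGex
  -- pointwise convergence of G to 0
  have hGtend : ∀ x, Tendsto (fun m => G m x) atTop (𝓝 0) := by
    intro x
    rw [Metric.tendsto_atTop]
    intro e he
    obtain ⟨δ, hδpos, hδ⟩ := Metric.uniformContinuousOn_iff.1
      (hKcpt.uniformContinuousOn_of_continuous (hcont x).continuousOn) (e/2) (by linarith)
    obtain ⟨m₀, hm₀⟩ := exists_nat_one_div_lt hδpos
    refine ⟨m₀, fun m hm => ?_⟩
    have hGle : G m x ≤ e/2 := by
      refine hGsmall m x (e/2) (by linarith) ?_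
      intro y y' hy hy' hd
      have : dist y y' < δ := by
        refine lt_of_lt_of_le (lt_of_lt_of_le hd ?_) hm₀.le
        rw [div_le_div_iff₀ (by positivity) (by positivity)]
        have : (m₀ : ℝ) ≤ m := Nat.cast_le.2 hm
        nlinarith
      have := hδ y hy y' hy' this
      rw [Real.dist_eq] at this
      exact this.le
    rw [Real.dist_eq, sub_zero, abs_of_nonneg (hG0 m x)]
    linarith
  -- DCT
  have hGint : Tendsto (fun m => ∫ x, G m x ∂ν) atTop (𝓝 0) := by
    have := tendsto_integral_of_dominated_convergence (F := fun m x => G m x)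
      (f := fun _ => (0:ℝ)) (bound := fun _ => 2*M) (μ := ν)
      (fun m => (hGmeas m).aestronglyMeasurable)
      (integrable_const _)
      (fun m => Filter.Eventually.of_forall fun x => by
        rw [Real.norm_eq_abs, abs_of_nonneg (hG0 m x)]; exact hG2M m x)
      (Filter.Eventually.of_forall fun x => hGtend x)
    simpa using this
  obtain ⟨m, hmG⟩ : ∃ m, ∫ x, G m x ∂ν ≤ ε/2 := by
    obtain ⟨m, hm⟩ := (Metric.tendsto_atTop.1 hGint) (ε/2) (by linarith)
    refine ⟨m, ?_⟩
    have := hm m le_rfl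
    rw [Real.dist_eq, sub_zero] at this
    exact (le_abs_self _).trans this.le
  -- partition of unity
  set r : ℝ := 1/(m+1) with hr
  have hrpos : 0 < r := by positivity
  obtain ⟨t, htK, htfin, htcov⟩ := finite_cover_balls_of_compact hKcpt
    (show 0 < r/2 by positivity)
  classical
  set T := htfin.toFinset with hT
  set ψ : Y → Y → ℝ := fun c y => max 0 (2 - (2/r) * dist y c) with hψ
  set S : Y → ℝ := fun y => ∑ c ∈ T, ψ c y with hS
  set den : Y → ℝ := fun y => max (S y) 1 with hden
  have hψ0 : ∀ c y, 0 ≤ ψ c y := fun c y => le_max_left 0 _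
  have hψ2 : ∀ c y, ψ c y ≤ 2 := by
    intro c y
    refine max_le (by norm_num) ?_
    have : 0 ≤ (2/r) * dist y c := by positivity
    linarith
  have hψcont : ∀ c, Continuous (ψ c) := by
    intro c
    exact continuous_const.max (continuous_const.sub (continuous_const.mul
      (continuous_id.dist continuous_const)))
  have hScont : Continuous S := continuous_finset_sum T (fun c _ => hψcont c)
  have hdencont : Continuous den := hScont.max continuous_const
  have hden1 : ∀ y, 1 ≤ den y := fun y => le_max_right _ _
  have hdenpos : ∀ y, 0 < den y := fun y => lt_of_lt_of_le one_pos (hden1 y)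
  have hSle : ∀ y, S y ≤ den y := fun y => le_max_left _ _
  have hS0 : ∀ y, 0 ≤ S y := fun y => Finset.sum_nonneg fun c _ => hψ0 c y
  have hS1 : ∀ y, y ∈ K → 1 ≤ S y := by
    intro y hy
    have := htcov hy
    simp only [Set.mem_iUnion] at this
    obtain ⟨c, hc, hdist⟩ := this
    rw [Metric.mem_ball] at hdist
    have h1 : 1 ≤ ψ c y := by
      refine le_trans ?_ (le_max_right 0 _)
      have : (2/r) * dist y c ≤ (2/r) * (r/2) := by
        refine mul_le_mul_of_nonneg_left hdist.le (by positivity)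
      have h2 : (2/r) * (r/2) = 1 := by field_simp
      linarith [this.trans_eq h2]
    calc (1:ℝ) ≤ ψ c y := h1
      _ ≤ S y := Finset.single_le_sum (f := fun c => ψ c y) (fun i _ => hψ0 i y)
          (htfin.mem_toFinset.2 hc)
  have hdenK : ∀ y, y ∈ K → den y = S y := fun y hy => max_eq_left (hS1 y hy)
  have hψr : ∀ c y, ψ c y ≠ 0 → dist y c < r := by
    intro c y hcy
    by_contra hge
    push_neg at hge
    apply hcy
    have : 2 - (2/r) * dist y c ≤ 0 := by
      have : (2/r) * r ≤ (2/r) * dist y c := mul_le_mul_of_nonneg_left hge (by positivity)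
      have h2 : (2/r) * r = 2 := by field_simp
      linarith
    simp [hψ, max_eq_left this]
  -- the bounded continuous weights
  set Φ : Y → (Y →ᵇ ℝ) := fun c => BoundedContinuousFunction.ofNormedAddCommGroup
    (fun y => ψ c y / den y) ((hψcont c).div hdencont (fun y => (hdenpos y).ne'))
    2 (fun y => by
      rw [Real.norm_eq_abs, abs_of_nonneg (div_nonneg (hψ0 c y) (hdenpos y).le)]
      exact (div_le_self (hψ0 c y) (hden1 y)).trans (hψ2 c y)) with hΦdef
  have hΦapp : ∀ c y, Φ c y = ψ c y / den y := fun _ _ => rfl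
  have hΦ0 : ∀ c y, 0 ≤ Φ c y := fun c y => div_nonneg (hψ0 c y) (hdenpos y).le
  have hΦsum : ∀ y, ∑ c ∈ T, Φ c y = S y / den y := by
    intro y
    simp_rw [hΦapp]
    rw [← Finset.sum_div]
  have hΦsum1 : ∀ y, ∑ c ∈ T, Φ c y ≤ 1 := by
    intro y
    rw [hΦsum]
    exact div_le_one_of_le₀ (hSle y) (hdenpos y).le
  have hΦsumK : ∀ y, y ∈ K → ∑ c ∈ T, Φ c y = 1 := by
    intro y hy
    rw [hΦsum, hdenK y hy]
    exact div_self (by linarith [hS1 y hy])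
  set q : X × Y → ℝ := fun z => ∑ c ∈ T, h (z.1, c) * Φ c z.2 with hq
  have hqb : ∀ z, |q z| ≤ M := by
    intro z
    calc |q z| ≤ ∑ c ∈ T, |h (z.1, c) * Φ c z.2| := Finset.abs_sum_le_sum_abs _ _
      _ ≤ ∑ c ∈ T, M * Φ c z.2 := by
          refine Finset.sum_le_sum fun c _ => ?_
          rw [abs_mul, abs_of_nonneg (hΦ0 c z.2)]
          exact mul_le_mul_of_nonneg_right (hbM _) (hΦ0 c z.2)
      _ = M * ∑ c ∈ T, Φ c z.2 := by rw [Finset.mul_sum]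
      _ ≤ M * 1 := mul_le_mul_of_nonneg_left (hΦsum1 z.2) hM.le
      _ = M := mul_one M
  have hqmeas : Measurable q := by
    refine Finset.measurable_sum T fun c _ => ?_
    exact ((hmeas c).comp measurable_fst).mul ((Φ c).continuous.measurable.comp measurable_snd)
  have hsplit : ∀ θ : Measure (X × Y), IsProbabilityMeasure θ →
      ∫ z, q z ∂θ = ∑ c ∈ T, ∫ z, h (z.1, c) * Φ c z.2 ∂θ := by
    intro θ hθ
    refine integral_finset_sum T fun c _ => ?_
    refine bdd_integrable θ (((hmeas c).comp measurable_fst).mul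
      ((Φ c).continuous.measurable.comp measurable_snd)) (C := M * 2) ?_
    intro z
    rw [abs_mul]
    refine mul_le_mul (hbM _) ?_ (abs_nonneg _) hM.le
    rw [abs_of_nonneg (hΦ0 c z.2)]
    exact (div_le_self (hψ0 c z.2) (hden1 z.2)).trans (hψ2 c z.2)
  have htendq : Tendsto (fun n => ∫ z, q z ∂(μ n)) atTop (𝓝 (∫ z, q z ∂μlim)) := by
    have heq : ∀ n, ∫ z, q z ∂(μ n) = ∑ c ∈ T, ∫ z, h (z.1, c) * Φ c z.2 ∂(μ n) :=
      fun n => hsplit (μ n) inferInstance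
    rw [hsplit μlim inferInstance]
    simp_rw [heq]
    refine tendsto_finset_sum T fun c _ => ?_
    exact prod_tendsto ν μ μlim hmarg hmarglim hweak (fun x => h (x, c)) (hmeas c)
      M (fun x => hbM (x, c)) (Φ c)
  -- pointwise error bound
  have hpt : ∀ z : X × Y, |h z - q z| ≤ G m z.1 + Set.indicator Kᶜ (fun _ => 2*M) z.2 := by
    intro z
    by_cases hzK : z.2 ∈ K
    · rw [Set.indicator_of_notMem (by simpa using hzK), add_zero]
      have hsum1 := hΦsumK z.2 hzK
      have hdiff : h z - q z = ∑ c ∈ T, Φ c z.2 * (h z - h (z.1, c)) := by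
        have h1 : ∑ c ∈ T, Φ c z.2 * h z = h z := by
          rw [← Finset.sum_mul, hsum1, one_mul]
        calc h z - q z = ∑ c ∈ T, Φ c z.2 * h z - ∑ c ∈ T, h (z.1, c) * Φ c z.2 := by
              rw [h1]
          _ = ∑ c ∈ T, (Φ c z.2 * h z - h (z.1, c) * Φ c z.2) := by
              rw [Finset.sum_sub_distrib]
          _ = ∑ c ∈ T, Φ c z.2 * (h z - h (z.1, c)) := by
              refine Finset.sum_congr rfl fun c _ => by ring
      rw [hdiff]
      calc |∑ c ∈ T, Φ c z.2 * (h z - h (z.1, c))|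
          ≤ ∑ c ∈ T, |Φ c z.2 * (h z - h (z.1, c))| := Finset.abs_sum_le_sum_abs _ _
        _ ≤ ∑ c ∈ T, Φ c z.2 * G m z.1 := by
            refine Finset.sum_le_sum fun c hc => ?_
            rw [abs_mul, abs_of_nonneg (hΦ0 c z.2)]
            by_cases hc0 : ψ c z.2 = 0
            · have : Φ c z.2 = 0 := by rw [hΦapp, hc0, zero_div]
              rw [this, zero_mul, zero_mul]
            · refine mul_le_mul_of_nonneg_left ?_ (hΦ0 c z.2)
              have hcK : c ∈ K := htK (htfin.mem_toFinset.1 hc)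
              have hdist : dist z.2 c < r := hψr c z.2 hc0
              have := hGub m z.1 z.2 c hzK hcK hdist
              simpa using this
        _ = (∑ c ∈ T, Φ c z.2) * G m z.1 := by rw [Finset.sum_mul]
        _ = G m z.1 := by rw [hsum1, one_mul]
    · rw [Set.indicator_of_mem (by simpa using hzK)]
      calc |h z - q z| ≤ |h z| + |q z| := abs_sub _ _
        _ ≤ M + M := add_le_add (hbM z) (hqb z)
        _ ≤ G m z.1 + 2*M := by linarith [hG0 m z.1]
  -- key integral bound
  have key : ∀ θ : Measure (X × Y), IsProbabilityMeasure θ → θ.map Prod.fst = ν →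
      (θ.map Prod.snd) Kᶜ ≤ ENNReal.ofReal δ' → |∫ z, h z ∂θ - ∫ z, q z ∂θ| ≤ ε := by
    intro θ hθ hθ1 hθ2
    have hhint : Integrable h θ := bdd_integrable θ hjm hbM
    have hqint : Integrable q θ := bdd_integrable θ hqmeas hqb
    have hGfint : Integrable (fun z : X × Y => G m z.1) θ := by
      refine bdd_integrable θ ((hGmeas m).comp measurable_fst) (C := 2*M) ?_
      intro z
      rw [abs_of_nonneg (hG0 m z.1)]
      exact hG2M m z.1
    have hindmeas : Measurable fun z : X × Y => Set.indicator Kᶜ (fun _ => 2*M) z.2 :=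
      (measurable_const.indicator hKc.compl).comp measurable_snd
    have hindint : Integrable (fun z : X × Y => Set.indicator Kᶜ (fun _ => 2*M) z.2) θ := by
      refine bdd_integrable θ hindmeas (C := 2*M) ?_
      intro z
      by_cases hz : z.2 ∈ Kᶜ
      · rw [Set.indicator_of_mem hz]; rw [abs_of_nonneg (by linarith)]
      · rw [Set.indicator_of_notMem hz]; rw [abs_of_nonneg le_rfl]; linarith
    have hind : ∫ z, Set.indicator Kᶜ (fun _ => 2*M) z.2 ∂θ ≤ 2*M*δ' := by
      have h1 : ∫ z, Set.indicator Kᶜ (fun _ => 2*M) z.2 ∂θ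
          = ∫ y, Set.indicator Kᶜ (fun _ => 2*M) y ∂(θ.map Prod.snd) := by
        rw [integral_map measurable_snd.aemeasurable
          (measurable_const.indicator hKc.compl).aestronglyMeasurable]
      rw [h1, integral_indicator_const _ hKc.compl]
      have h2 : ((θ.map Prod.snd) Kᶜ).toReal ≤ δ' := by
        refine ENNReal.toReal_le_of_le_ofReal hδ'pos.le hθ2
      calc ((θ.map Prod.snd) Kᶜ).toReal • (2*M) = ((θ.map Prod.snd) Kᶜ).toReal * (2*M) := rfl
        _ ≤ δ' * (2*M) := mul_le_mul_of_nonneg_right h2 (by linarith)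
        _ = 2*M*δ' := by ring
    calc |∫ z, h z ∂θ - ∫ z, q z ∂θ| = |∫ z, (h z - q z) ∂θ| := by
          rw [integral_sub hhint hqint]
      _ ≤ ∫ z, |h z - q z| ∂θ := by
          simpa [Real.norm_eq_abs] using
            norm_integral_le_integral_norm (μ := θ) (fun z => h z - q z)
      _ ≤ ∫ z, (G m z.1 + Set.indicator Kᶜ (fun _ => 2*M) z.2) ∂θ := by
          refine integral_mono (hhint.sub hqint).abs (hGfint.add hindint) hpt
      _ = ∫ z, G m z.1 ∂θ + ∫ z, Set.indicator Kᶜ (fun _ => 2*M) z.2 ∂θ :=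
          integral_add hGfint hindint
      _ ≤ ε/2 + 2*M*δ' := by
          refine add_le_add ?_ hind
          rw [integral_fst_marg θ ν hθ1 (hGmeas m).aestronglyMeasurable]
          exact hmG
      _ = ε := by
          rw [hδ']
          field_simp
          ring
  exact ⟨fun n => ∫ z, q z ∂(μ n), ∫ z, q z ∂μlim, htendq,
    fun n => key (μ n) inferInstance (hmarg n) (hKn n), key μlim inferInstance hmarglim hKl⟩
end BddCase
theorem stmt11 {X Y : Type*} [TopologicalSpace X] [PolishSpace X]
    [MeasurableSpace X] [BorelSpace X]
    [TopologicalSpace Y] [PolishSpace Y] [MeasurableSpace Y] [BorelSpace Y]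
    (ν : Measure X) [IsProbabilityMeasure ν]
    (h : X × Y → ℝ)
    (hmeas : ∀ y, Measurable fun x => h (x, y))
    (hcont : ∀ x, Continuous fun y => h (x, y))
    (f : X → ℝ) (hf0 : ∀ x, 0 ≤ f x) (hfint : Integrable f ν)
    (hbound : ∀ x y, |h (x, y)| ≤ f x)
    (μ : ℕ → Measure (X × Y)) (μlim : Measure (X × Y))
    [∀ n, IsProbabilityMeasure (μ n)] [IsProbabilityMeasure μlim]
    (hmarg : ∀ n, (μ n).map Prod.fst = ν) (hmarglim : μlim.map Prod.fst = ν)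
    (hweak : ∀ g : BoundedContinuousFunction (X × Y) ℝ,
      Tendsto (fun n => ∫ z, g z ∂(μ n)) atTop (nhds (∫ z, g z ∂μlim))) :
    Tendsto (fun n => ∫ z, h z ∂(μ n)) atTop (nhds (∫ z, h z ∂μlim)) := by
  have hjm : Measurable h := joint_meas h hmeas hcont
  have hbound' : ∀ z : X × Y, |h z| ≤ f z.1 := fun z => hbound z.1 z.2
  apply tendsto_of_approx
  intro ε hε
  -- choose the truncation level
  have hFmeas : ∀ (c : ℝ), AEStronglyMeasurable (fun x => max (f x - c) 0) ν :=
    fun c => Continuous.comp_aestronglyMeasurable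
      ((continuous_id.sub continuous_const).max continuous_const) hfint.1
  have hFint : ∀ (j : ℕ), Integrable (fun x => max (f x - (j:ℝ)) 0) ν := by
    intro j
    refine Integrable.mono' hfint.abs (hFmeas j) ?_
    refine Filter.Eventually.of_forall fun x => ?_
    rw [Real.norm_eq_abs, abs_of_nonneg (le_max_right _ _)]
    refine max_le ?_ (abs_nonneg _)
    have : (0:ℝ) ≤ (j:ℝ) := Nat.cast_nonneg j
    calc f x - j ≤ f x := by linarith
      _ ≤ |f x| := le_abs_self _
  have hFtend : Tendsto (fun j : ℕ => ∫ x, max (f x - (j:ℝ)) 0 ∂ν) atTop (𝓝 0) := by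
    have := tendsto_integral_of_dominated_convergence (F := fun j x => max (f x - (j:ℝ)) 0)
      (f := fun _ => (0:ℝ)) (bound := fun x => |f x|) (μ := ν)
      (fun j => hFmeas j)
      hfint.abs
      (fun j => Filter.Eventually.of_forall fun x => by
        rw [Real.norm_eq_abs, abs_of_nonneg (le_max_right _ _)]
        refine max_le ?_ (abs_nonneg _)
        have : (0:ℝ) ≤ (j:ℝ) := Nat.cast_nonneg j
        calc f x - j ≤ f x := by linarith
          _ ≤ |f x| := le_abs_self _)
      (Filter.Eventually.of_forall fun x => ?_)
    · simpa using this
    · -- pointwise convergence to 0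
      rw [Metric.tendsto_atTop]
      intro e he
      obtain ⟨j₀, hj₀⟩ := exists_nat_ge (f x)
      refine ⟨j₀, fun j hj => ?_⟩
      have hfj : f x - (j:ℝ) ≤ 0 := by
        have : (j₀:ℝ) ≤ (j:ℝ) := Nat.cast_le.2 hj
        linarith
      rw [Real.dist_eq, sub_zero]
      show |max (f x - (j:ℝ)) 0| < e
      rw [max_eq_right hfj, abs_zero]
      exact he
  obtain ⟨j, hj⟩ : ∃ j : ℕ, ∫ x, max (f x - (j:ℝ)) 0 ∂ν ≤ ε := by
    obtain ⟨j, hjj⟩ := (Metric.tendsto_atTop.1 hFtend) ε hε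
    refine ⟨j, ?_⟩
    have := hjj j le_rfl
    rw [Real.dist_eq, sub_zero] at this
    exact (le_abs_self _).trans this.le
  set M : ℝ := (j:ℝ) + 1 with hMdef
  have hM : 0 < M := by positivity
  have hFM : ∀ x, max (f x - M) 0 ≤ max (f x - (j:ℝ)) 0 := by
    intro x
    refine max_le ?_ (le_max_right _ _)
    refine le_trans ?_ (le_max_left _ _)
    rw [hMdef]
    linarith
  set hM' : X × Y → ℝ := fun z => max (-M) (min (h z) M) with hhM
  have hM'meas : ∀ y, Measurable fun x => hM' (x, y) :=
    fun y => measurable_const.max ((hmeas y).min measurable_const)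
  have hM'cont : ∀ x, Continuous fun y => hM' (x, y) :=
    fun x => continuous_const.max ((hcont x).min continuous_const)
  have hM'b : ∀ z, |hM' z| ≤ M := by
    intro z
    rw [abs_le]
    constructor
    · exact le_max_left _ _
    · exact max_le (by linarith) (min_le_right _ _)
  have htrunc : ∀ z : X × Y, |h z - hM' z| ≤ max (f z.1 - M) 0 := by
    intro z
    have hfz := hbound' z
    rcases le_total (h z) M with h1 | h1
    · rcases le_total (-M) (h z) with h2 | h2
      · have : hM' z = h z := by
          rw [hhM]
          simp only []
          rw [min_eq_left h1, max_eq_right h2]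
        rw [this, sub_self, abs_zero]
        exact le_max_right _ _
      · have : hM' z = -M := by
          rw [hhM]
          simp only []
          rw [min_eq_left h1, max_eq_left h2]
        rw [this]
        have habs : |h z| = -(h z) := abs_of_nonpos (by linarith)
        have : |h z - -M| = -(h z) - M := by
          rw [abs_of_nonpos (by linarith)]; ring
        rw [this]
        refine le_trans ?_ (le_max_left _ _)
        rw [habs] at hfz
        linarith
    · have : hM' z = M := by
        rw [hhM]
        simp only []
        rw [min_eq_right h1, max_eq_right (by linarith)]
      rw [this]
      have : |h z - M| = h z - M := abs_of_nonneg (by linarith)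
      rw [this]
      refine le_trans ?_ (le_max_left _ _)
      have : h z ≤ |h z| := le_abs_self _
      linarith
  have key : ∀ θ : Measure (X × Y), IsProbabilityMeasure θ → θ.map Prod.fst = ν →
      |∫ z, h z ∂θ - ∫ z, hM' z ∂θ| ≤ ε := by
    intro θ hθ hθ1
    have hffst : Integrable (fun z : X × Y => f z.1) θ := by
      have := hfint
      rw [← hθ1] at this
      exact (integrable_map_measure this.1 measurable_fst.aemeasurable).1 this
    have hhint : Integrable h θ := by
      refine Integrable.mono' hffst hjm.aestronglyMeasurable ?_
      exact Filter.Eventually.of_forall fun z => by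
        rw [Real.norm_eq_abs]; exact hbound' z
    have hM'int : Integrable hM' θ :=
      bdd_integrable θ (measurable_const.max (hjm.min measurable_const)) hM'b
    have hFMint : Integrable (fun z : X × Y => max (f z.1 - M) 0) θ := by
      refine Integrable.mono' hffst.abs ?_ ?_
      · exact Continuous.comp_aestronglyMeasurable
          ((continuous_id.sub continuous_const).max continuous_const) hffst.1
      · refine Filter.Eventually.of_forall fun z => ?_
        rw [Real.norm_eq_abs, abs_of_nonneg (le_max_right _ _)]
        refine max_le ?_ (abs_nonneg _)
        calc f z.1 - M ≤ f z.1 := by linarith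
          _ ≤ |f z.1| := le_abs_self _
    calc |∫ z, h z ∂θ - ∫ z, hM' z ∂θ| = |∫ z, (h z - hM' z) ∂θ| := by
          rw [integral_sub hhint hM'int]
      _ ≤ ∫ z, |h z - hM' z| ∂θ := by
          simpa [Real.norm_eq_abs] using
            norm_integral_le_integral_norm (μ := θ) (fun z => h z - hM' z)
      _ ≤ ∫ z, max (f z.1 - M) 0 ∂θ := by
          refine integral_mono (hhint.sub hM'int).abs hFMint htrunc
      _ = ∫ x, max (f x - M) 0 ∂ν := integral_fst_marg θ ν hθ1 (hFmeas M)
      _ ≤ ∫ x, max (f x - (j:ℝ)) 0 ∂ν := by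
          refine integral_mono ?_ (hFint j) hFM
          refine Integrable.mono' (hFint j) (hFmeas M) ?_
          refine Filter.Eventually.of_forall fun x => ?_
          rw [Real.norm_eq_abs, abs_of_nonneg (le_max_right _ _)]
          exact hFM x
      _ ≤ ε := hj
  exact ⟨fun n => ∫ z, hM' z ∂(μ n), ∫ z, hM' z ∂μlim,
    bounded_case ν hM' hM'meas hM'cont M hM hM'b μ μlim hmarg hmarglim hweak,
    fun n => key (μ n) inferInstance (hmarg n), key μlim inferInstance hmarglim⟩
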